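/- Let B > 0 and 0 ≤ a₁ ≤ a₂ be real numbers. The function (d₁, d₂, t) ↦ B·t·(a₁·2^((d₁+d₂)/(B·t)) + (a₂ − a₁)·2^(d₂/(B·t)) − a₂) is convex on the convex set {(d₁, d₂, t) ∈ ℝ³ : t > 0}. -/

import Mathlib

lemma persp_aux (B u v : ℝ) (hB : 0 < B) :
    ConvexOn ℝ {p : ℝ × ℝ × ℝ | 0 < p.2.2}
      (fun p : ℝ × ℝ × ℝ =>
        B * p.2.2 * ((2 : ℝ) ^ ((u * p.1 + v * p.2.1) / (B * p.2.2)) - 1)) := by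
  have h2 : ∀ x : ℝ, (2 : ℝ) ^ x = Real.exp (x * Real.log 2) := fun x => by
    rw [Real.rpow_def_of_pos two_pos, mul_comm]
  constructor
  · intro x hx y hy a b ha hb hab
    simp only [Set.mem_setOf_eq] at *
    simp only [Prod.snd_add, Prod.smul_snd, smul_eq_mul]
    rcases eq_or_lt_of_le ha with h | h
    · have hb1 : b = 1 := by linarith
      simp [← h, hb1, hy]
    · nlinarith [mul_nonneg hb hy.le, mul_pos h hx]
  · rintro ⟨x1, x2, x3⟩ hx ⟨y1, y2, y3⟩ hy a b ha hb hab
    simp only [Set.mem_setOf_eq] at hx hy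
    simp only [Prod.smul_mk, Prod.mk_add_mk, smul_eq_mul]
    set s := B * x3 with hs
    set t := B * y3 with ht
    have hs0 : 0 < s := mul_pos hB hx
    have ht0 : 0 < t := mul_pos hB hy
    set X := u * x1 + v * x2 with hX
    set Y := u * y1 + v * y2 with hY
    have hS : 0 < a * s + b * t := by
      rcases eq_or_lt_of_le ha with h | h
      · have hb1 : b = 1 := by linarith
        simp [← h, hb1, ht0]
      · nlinarith [mul_nonneg hb ht0.le, mul_pos h hs0]
    set S := a * s + b * t with hSdef
    have hw : a * s / S + b * t / S = 1 := by field_simp; exact hSdef.symm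
    have key := convexOn_exp.2 (Set.mem_univ (X / s * Real.log 2))
      (Set.mem_univ (Y / t * Real.log 2))
      (by positivity : (0:ℝ) ≤ a * s / S) (by positivity : (0:ℝ) ≤ b * t / S) hw
    simp only [smul_eq_mul] at key
    have e1 : a * s / S * (X / s * Real.log 2) + b * t / S * (Y / t * Real.log 2)
        = (a * X + b * Y) / S * Real.log 2 := by
      field_simp
    rw [e1] at key
    -- multiply key by S
    have key2 : S * Real.exp ((a * X + b * Y) / S * Real.log 2)
        ≤ a * s * Real.exp (X / s * Real.log 2) + b * t * Real.exp (Y / t * Real.log 2) := by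
      have := mul_le_mul_of_nonneg_left key hS.le
      calc S * Real.exp ((a * X + b * Y) / S * Real.log 2)
          ≤ S * (a * s / S * Real.exp (X / s * Real.log 2)
              + b * t / S * Real.exp (Y / t * Real.log 2)) := this
        _ = a * s * Real.exp (X / s * Real.log 2)
              + b * t * Real.exp (Y / t * Real.log 2) := by field_simp
    have harg : (u * (a * x1 + b * y1) + v * (a * x2 + b * y2)) / (B * (a * x3 + b * y3))
        = (a * X + b * Y) / S := by
      rw [hSdef, hX, hY, hs, ht]; congr 1 <;> ring
    rw [harg, h2, h2, h2,
      show B * (a * x3 + b * y3) = a * s + b * t from by rw [hs, ht]; ring]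
    nlinarith [key2]

theorem stmt_3 (B a₁ a₂ : ℝ) (hB : 0 < B) (ha₁ : 0 ≤ a₁) (h12 : a₁ ≤ a₂) :
    ConvexOn ℝ {p : ℝ × ℝ × ℝ | 0 < p.2.2}
      (fun p : ℝ × ℝ × ℝ =>
        B * p.2.2 * (a₁ * (2 : ℝ) ^ ((p.1 + p.2.1) / (B * p.2.2))
          + (a₂ - a₁) * (2 : ℝ) ^ (p.2.1 / (B * p.2.2)) - a₂)) := by
  have h1 := (persp_aux B 1 1 hB).smul ha₁
  have h2 := (persp_aux B 0 1 hB).smul (sub_nonneg.2 h12)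
  have h := h1.add h2
  simp only [one_mul, zero_mul, zero_add, smul_eq_mul] at h
  convert h using 1
  any_goals rfl
  funext p
  simp only [Pi.add_apply]
  ring
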